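/- Let c ≥ 2 be an integer and σ > 0. Let z be a random vector on ℝ^c with law N(0, σ² I_c) (independent centered Gaussian coordinates with variance σ²), let p(z) = softmax(z) and A(z) = diag(p(z)) − p(z)p(z)ᵀ, and let à = E[A(z)] (entrywise expectation). Then à is a symmetric positive semidefinite c×c matrix, à · 1_c = 0, and the kernel of à equals the span of the all-ones vector 1_c; equivalently, à has rank exactly c − 1 and its (c−1)-st largest eigenvalue is strictly positive. -/

import Mathlib

open Matrix MeasureTheory ProbabilityTheory
open scoped NNReal

/-- The softmax function on `ℝ^c`. -/
noncomputable def softmaxFn {c : ℕ} (z : Fin c → ℝ) : Fin c → ℝ :=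
  fun i => Real.exp (z i) / ∑ k, Real.exp (z k)

/-- The Hessian `A(z) = diag (softmax z) - softmax z (softmax z)ᵀ` of the
cross-entropy loss with respect to the logits `z`. -/
noncomputable def logitHessian {c : ℕ} (z : Fin c → ℝ) : Matrix (Fin c) (Fin c) ℝ :=
  Matrix.diagonal (softmaxFn z) - Matrix.vecMulVec (softmaxFn z) (softmaxFn z)

section helpers

variable {c : ℕ}

lemma sum_exp_pos (hc : 0 < c) (z : Fin c → ℝ) : 0 < ∑ k, Real.exp (z k) := by
  haveI : Nonempty (Fin c) := Fin.pos_iff_nonempty.mp hc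
  exact Finset.sum_pos (fun k _ => Real.exp_pos _) Finset.univ_nonempty

lemma softmax_pos (hc : 0 < c) (z : Fin c → ℝ) (i : Fin c) : 0 < softmaxFn z i :=
  div_pos (Real.exp_pos _) (sum_exp_pos hc z)

lemma softmax_le_one (hc : 0 < c) (z : Fin c → ℝ) (i : Fin c) : softmaxFn z i ≤ 1 := by
  rw [softmaxFn, div_le_one (sum_exp_pos hc z)]
  exact Finset.single_le_sum (fun k _ => (Real.exp_pos _).le) (Finset.mem_univ i)

lemma sum_softmax (hc : 0 < c) (z : Fin c → ℝ) : ∑ i, softmaxFn z i = 1 := by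
  simp only [softmaxFn, ← Finset.sum_div]
  exact div_self (sum_exp_pos hc z).ne'

lemma logitHessian_apply (z : Fin c → ℝ) (i j : Fin c) :
    logitHessian z i j = Matrix.diagonal (softmaxFn z) i j - softmaxFn z i * softmaxFn z j := by
  simp [logitHessian, Matrix.vecMulVec_apply]

lemma abs_logitHessian_le_one (hc : 0 < c) (z : Fin c → ℝ) (i j : Fin c) :
    |logitHessian z i j| ≤ 1 := by
  rw [logitHessian_apply]
  have h0 : ∀ k, 0 < softmaxFn z k := softmax_pos hc z
  have h1 : ∀ k, softmaxFn z k ≤ 1 := softmax_le_one hc z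
  rcases eq_or_ne i j with rfl | hij
  · rw [Matrix.diagonal_apply_eq, abs_le]
    constructor
    · nlinarith [h0 i, h1 i]
    · nlinarith [h0 i, h1 i]
  · rw [Matrix.diagonal_apply_ne _ hij, zero_sub, abs_neg, abs_of_pos (mul_pos (h0 i) (h0 j))]
    nlinarith [h0 i, h1 i, h0 j, h1 j]

lemma continuous_logitHessian (hc : 0 < c) (i j : Fin c) :
    Continuous fun z : Fin c → ℝ => logitHessian z i j := by
  have hsm : ∀ k : Fin c, Continuous fun z : Fin c → ℝ => softmaxFn z k := by
    intro k
    apply Continuous.div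
    · exact Real.continuous_exp.comp (continuous_apply k)
    · exact continuous_finset_sum _ fun l _ =>
        Real.continuous_exp.comp (continuous_apply l)
    · intro z; exact (sum_exp_pos hc z).ne'
  simp only [logitHessian_apply]
  rcases eq_or_ne i j with rfl | hij
  · simp only [Matrix.diagonal_apply_eq]
    exact (hsm i).sub ((hsm i).mul (hsm i))
  · simp only [Matrix.diagonal_apply_ne _ hij]
    exact continuous_const.sub ((hsm i).mul (hsm j))

lemma logitHessian_mulVec (z : Fin c → ℝ) (v : Fin c → ℝ) :
    logitHessian z *ᵥ v =
      fun i => softmaxFn z i * (v i - ∑ j, softmaxFn z j * v j) := by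
  funext i
  show ∑ j, logitHessian z i j * v j = _
  simp only [logitHessian_apply, sub_mul, Finset.sum_sub_distrib,
    Matrix.diagonal_apply, ite_mul, zero_mul, Finset.sum_ite_eq, Finset.mem_univ, if_true]
  rw [mul_sub, Finset.mul_sum]
  congr 1
  apply Finset.sum_congr rfl
  intros; ring

lemma quad_eq (hc : 0 < c) (z : Fin c → ℝ) (v : Fin c → ℝ) :
    v ⬝ᵥ (logitHessian z *ᵥ v) =
      ∑ i, softmaxFn z i * (v i - ∑ j, softmaxFn z j * v j) ^ 2 := by
  set m := ∑ j, softmaxFn z j * v j with hm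
  have h0 : ∑ i, softmaxFn z i * (v i - m) = 0 := by
    simp only [mul_sub, Finset.sum_sub_distrib, ← Finset.sum_mul, sum_softmax hc z]
    simp [hm]
  rw [logitHessian_mulVec]
  calc ∑ i, v i * (softmaxFn z i * (v i - m))
      = ∑ i, (softmaxFn z i * (v i - m) ^ 2 + m * (softmaxFn z i * (v i - m))) := by
        apply Finset.sum_congr rfl; intros; ring
    _ = (∑ i, softmaxFn z i * (v i - m) ^ 2) + m * ∑ i, softmaxFn z i * (v i - m) := by
        rw [Finset.sum_add_distrib, Finset.mul_sum]
    _ = ∑ i, softmaxFn z i * (v i - m) ^ 2 := by rw [h0, mul_zero, add_zero]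

lemma quad_nonneg (hc : 0 < c) (z : Fin c → ℝ) (v : Fin c → ℝ) :
    0 ≤ v ⬝ᵥ (logitHessian z *ᵥ v) := by
  rw [quad_eq hc]
  exact Finset.sum_nonneg fun i _ => mul_nonneg (softmax_pos hc z i).le (sq_nonneg _)

end helpers

/-- **The expected logit Hessian over a spherical Gaussian has rank exactly `c - 1`,
with kernel the span of the all-ones vector.**  For `z ~ N(0, σ² I_c)` and
`Ã = E[A(z)]` (entrywise expectation), `Ã` is symmetric positive semidefinite,
`Ã 1_c = 0`, its kernel is exactly the span of `1_c`, and `rank Ã = c - 1`. -/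
theorem expected_logit_hessian_rank_sub_one
    (c : ℕ) (hc : 2 ≤ c) (σ : ℝ≥0) (hσ : 0 < σ) :
    let μ : Measure (Fin c → ℝ) := Measure.pi fun _ => gaussianReal 0 (σ ^ 2)
    let Atil : Matrix (Fin c) (Fin c) ℝ :=
      Matrix.of fun i j => ∫ z, logitHessian z i j ∂μ
    Atil.IsSymm ∧ Atil.PosSemidef ∧
    Atil.mulVec (fun _ => 1) = 0 ∧
    (∀ v : Fin c → ℝ, Atil.mulVec v = 0 ↔ ∃ t : ℝ, v = fun _ => t) ∧
    Atil.rank = c - 1 := by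
  intro μ Atil
  have hc0 : 0 < c := by omega
  haveI : IsProbabilityMeasure μ := by
    exact MeasureTheory.Measure.pi.instIsProbabilityMeasure _
  -- integrability of entries
  have hint : ∀ i j, Integrable (fun z => logitHessian z i j) μ := by
    intro i j
    refine Integrable.mono' (integrable_const 1)
      ((continuous_logitHessian hc0 i j).aestronglyMeasurable) ?_
    exact ae_of_all _ fun z => by
      simpa using abs_logitHessian_le_one hc0 z i j
  -- swap integral and mulVec
  have hint_mv : ∀ (v : Fin c → ℝ) i,
      Integrable (fun z => (logitHessian z *ᵥ v) i) μ := by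
    intro v i
    have : (fun z => (logitHessian z *ᵥ v) i)
        = fun z => ∑ j, logitHessian z i j * v j := rfl
    rw [this]
    exact integrable_finset_sum _ fun j _ => (hint i j).mul_const _
  have hmv : ∀ v : Fin c → ℝ,
      Atil *ᵥ v = fun i => ∫ z, (logitHessian z *ᵥ v) i ∂μ := by
    intro v
    funext i
    show ∑ j, (∫ z, logitHessian z i j ∂μ) * v j = _
    have h1 : ∀ j : Fin c, (∫ z, logitHessian z i j ∂μ) * v j
        = ∫ z, logitHessian z i j * v j ∂μ := fun j =>
      (integral_mul_const (v j) _).symm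
    simp_rw [h1]
    rw [← integral_finset_sum _ fun j _ => (hint i j).mul_const _]
    rfl
  -- symmetry
  have hsymm : Atil.IsSymm := by
    rw [Matrix.IsSymm]
    ext i j
    rw [Matrix.transpose_apply]
    show (∫ z, logitHessian z j i ∂μ) = ∫ z, logitHessian z i j ∂μ
    congr 1
    funext z
    rw [logitHessian_apply, logitHessian_apply]
    rcases eq_or_ne i j with rfl | hij
    · rfl
    · rw [Matrix.diagonal_apply_ne _ hij, Matrix.diagonal_apply_ne _ (Ne.symm hij), mul_comm]
  have hherm : Atil.IsHermitian := by
    rw [Matrix.IsHermitian]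
    ext i j
    simp only [Matrix.conjTranspose_apply, star_trivial]
    exact congrFun (congrFun hsymm i) j
  -- quadratic form as an integral
  have hquad_int : ∀ v : Fin c → ℝ,
      Integrable (fun z => v ⬝ᵥ (logitHessian z *ᵥ v)) μ := by
    intro v
    have : (fun z => v ⬝ᵥ (logitHessian z *ᵥ v))
        = fun z => ∑ i, v i * (logitHessian z *ᵥ v) i := rfl
    rw [this]
    exact integrable_finset_sum _ fun i _ => (hint_mv v i).const_mul _
  have hquad : ∀ v : Fin c → ℝ,
      v ⬝ᵥ (Atil *ᵥ v) = ∫ z, v ⬝ᵥ (logitHessian z *ᵥ v) ∂μ := by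
    intro v
    rw [hmv v]
    show ∑ i, v i * ∫ z, (logitHessian z *ᵥ v) i ∂μ = _
    have h1 : ∀ i : Fin c, v i * ∫ z, (logitHessian z *ᵥ v) i ∂μ
        = ∫ z, v i * (logitHessian z *ᵥ v) i ∂μ := fun i =>
      (integral_const_mul (v i) _).symm
    simp_rw [h1]
    rw [← integral_finset_sum _ fun i _ => (hint_mv v i).const_mul _]
    rfl
  -- positive semidefiniteness
  have hpsd : Atil.PosSemidef := by
    refine Matrix.posSemidef_iff_dotProduct_mulVec.mpr ⟨hherm, fun x => ?_⟩
    rw [star_trivial, hquad x]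
    exact integral_nonneg fun z => quad_nonneg hc0 z x
  -- ones vector in the kernel
  have hzero : ∀ (t : ℝ), Atil *ᵥ (fun _ => t) = 0 := by
    intro t
    rw [hmv]
    funext i
    have hz : ∀ z : Fin c → ℝ, (logitHessian z *ᵥ fun _ => t) i = 0 := by
      intro z
      rw [logitHessian_mulVec]
      simp only [← Finset.sum_mul, sum_softmax hc0 z, one_mul, sub_self, mul_zero]
    simp only [hz]
    simp
  -- kernel characterization
  have hker_iff : ∀ v : Fin c → ℝ, Atil *ᵥ v = 0 ↔ ∃ t : ℝ, v = fun _ => t := by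
    intro v
    constructor
    · intro hv
      have h0 : ∫ z, v ⬝ᵥ (logitHessian z *ᵥ v) ∂μ = 0 := by
        rw [← hquad v, hv, dotProduct_zero]
      have hae : (fun z => v ⬝ᵥ (logitHessian z *ᵥ v)) =ᵐ[μ] 0 :=
        (integral_eq_zero_iff_of_nonneg (fun z => quad_nonneg hc0 z v)
          (hquad_int v)).mp h0
      obtain ⟨z₀, hz₀⟩ := hae.exists
      simp only [Pi.zero_apply] at hz₀
      rw [quad_eq hc0 z₀ v] at hz₀
      set m := ∑ j, softmaxFn z₀ j * v j with hm
      have hall := (Finset.sum_eq_zero_iff_of_nonneg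
        (fun i _ => mul_nonneg (softmax_pos hc0 z₀ i).le (sq_nonneg _))).mp hz₀
      refine ⟨m, funext fun i => ?_⟩
      have hi := hall i (Finset.mem_univ i)
      have hp := softmax_pos hc0 z₀ i
      have : (v i - m) ^ 2 = 0 := by
        rcases mul_eq_zero.mp hi with h | h
        · exact absurd h hp.ne'
        · exact h
      have := pow_eq_zero_iff (n := 2) (by norm_num) |>.mp this
      linarith [sub_eq_zero.mp this]
    · rintro ⟨t, rfl⟩
      exact hzero t
  -- rank
  have hkerspan : LinearMap.ker (Matrix.mulVecLin Atil)
      = Submodule.span ℝ {(fun _ => 1 : Fin c → ℝ)} := by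
    ext v
    rw [LinearMap.mem_ker, Matrix.mulVecLin_apply, hker_iff v,
      Submodule.mem_span_singleton]
    constructor
    · rintro ⟨t, rfl⟩
      exact ⟨t, by funext i; simp⟩
    · rintro ⟨a, rfl⟩
      exact ⟨a, by funext i; simp⟩
  have hone_ne : (fun _ => 1 : Fin c → ℝ) ≠ 0 := by
    intro h
    have := congrFun h ⟨0, hc0⟩
    simp at this
  have hkerdim : Module.finrank ℝ (LinearMap.ker (Matrix.mulVecLin Atil)) = 1 := by
    rw [hkerspan]
    exact finrank_span_singleton hone_ne
  have hrn := LinearMap.finrank_range_add_finrank_ker (Matrix.mulVecLin Atil)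
  rw [hkerdim, Module.finrank_fin_fun] at hrn
  have hrank : Atil.rank = c - 1 := by
    rw [Matrix.rank]
    omega
  exact ⟨hsymm, hpsd, hzero 1, hker_iff, hrank⟩
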